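/- Let A, B ∈ ℝ^{d×d} with B invertible. Then |det A - det B| / |det B| ≤ (‖B^{-1}‖ · ‖A - B‖ + 1)^d - 1 ≤ exp(d ‖B^{-1}‖ ‖A - B‖) - 1, where ‖·‖ is the spectral norm. -/

import Mathlib

open Polynomial Matrix

private lemma eval_charpoly' {n : Type*} [Fintype n] [DecidableEq n] {R : Type*} [CommRing R]
    (M : Matrix n n R) (μ : R) :
    M.charpoly.eval μ = (Matrix.scalar n μ - M).det := by
  rw [Matrix.charpoly, ← Polynomial.coe_evalRingHom, RingHom.map_det]
  congr 1
  ext i j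
  by_cases h : i = j <;> simp [charmatrix, h, Matrix.scalar, diagonal]

private lemma root_norm_le' (d : ℕ) (hd : 0 < d) (M : Matrix (Fin d) (Fin d) ℂ) (μ : ℂ)
    (hμ : M.charpoly.eval μ = 0) : ‖μ‖ ≤ ‖Matrix.toEuclideanCLM (𝕜 := ℂ) M‖ := by
  have h1 : ¬ IsUnit (Matrix.scalar (Fin d) μ - M) := by
    rw [Matrix.isUnit_iff_isUnit_det, ← eval_charpoly', hμ]
    simp
  have hspec : μ ∈ spectrum ℂ M := by
    rw [spectrum.mem_iff]
    have he : algebraMap ℂ (Matrix (Fin d) (Fin d) ℂ) μ = Matrix.scalar (Fin d) μ := rfl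
    rw [he]
    exact h1
  have : Nontrivial (EuclideanSpace ℂ (Fin d)) := by
    have : Nonempty (Fin d) := ⟨⟨0, hd⟩⟩
    infer_instance
  have hspec2 : μ ∈ spectrum ℂ (Matrix.toEuclideanCLM (𝕜 := ℂ) M) := by
    rw [AlgEquiv.spectrum_eq (Matrix.toEuclideanCLM (𝕜 := ℂ) (n := Fin d)) M]
    exact hspec
  exact spectrum.norm_le_norm_of_mem hspec2

private lemma complexify_norm_le' (d : ℕ) (M : Matrix (Fin d) (Fin d) ℝ) :
    ‖Matrix.toEuclideanCLM (𝕜 := ℂ) (M.map Complex.ofReal)‖ ≤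
      ‖Matrix.toEuclideanCLM (𝕜 := ℝ) M‖ := by
  apply ContinuousLinearMap.opNorm_le_bound _ (norm_nonneg _)
  intro v
  set T := Matrix.toEuclideanCLM (𝕜 := ℝ) M with hT
  set x : EuclideanSpace ℝ (Fin d) := WithLp.toLp 2 (fun i => (v i).re) with hx
  set y : EuclideanSpace ℝ (Fin d) := WithLp.toLp 2 (fun i => (v i).im) with hy
  have hre : ∀ i, ((Matrix.toEuclideanCLM (𝕜 := ℂ) (M.map Complex.ofReal) v) i).re
      = (T x) i := by
    intro i
    show ((M.map Complex.ofReal).mulVec v.ofLp i).re = M.mulVec x.ofLp i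
    simp [Matrix.mulVec, dotProduct, Complex.re_sum, Complex.mul_re, hx]
  have him : ∀ i, ((Matrix.toEuclideanCLM (𝕜 := ℂ) (M.map Complex.ofReal) v) i).im
      = (T y) i := by
    intro i
    show ((M.map Complex.ofReal).mulVec v.ofLp i).im = M.mulVec y.ofLp i
    simp [Matrix.mulVec, dotProduct, Complex.im_sum, Complex.mul_im, hy]
  have normsq : ∀ z : ℂ, ‖z‖ ^ 2 = z.re ^ 2 + z.im ^ 2 := by
    intro z
    rw [Complex.sq_norm, Complex.normSq_apply]; ring
  have hsq : ‖Matrix.toEuclideanCLM (𝕜 := ℂ) (M.map Complex.ofReal) v‖ ^ 2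
      = ‖T x‖ ^ 2 + ‖T y‖ ^ 2 := by
    rw [EuclideanSpace.norm_eq (Matrix.toEuclideanCLM (𝕜 := ℂ) (M.map Complex.ofReal) v),
      EuclideanSpace.norm_eq (T x), EuclideanSpace.norm_eq (T y),
      Real.sq_sqrt (by positivity), Real.sq_sqrt (by positivity), Real.sq_sqrt (by positivity),
      ← Finset.sum_add_distrib]
    refine Finset.sum_congr rfl fun i _ => ?_
    rw [normsq, hre i, him i, Real.norm_eq_abs, Real.norm_eq_abs, sq_abs, sq_abs]
  have hv : ‖x‖ ^ 2 + ‖y‖ ^ 2 = ‖v‖ ^ 2 := by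
    rw [EuclideanSpace.norm_eq v, EuclideanSpace.norm_eq x, EuclideanSpace.norm_eq y,
      Real.sq_sqrt (by positivity), Real.sq_sqrt (by positivity), Real.sq_sqrt (by positivity),
      ← Finset.sum_add_distrib]
    refine Finset.sum_congr rfl fun i _ => ?_
    rw [normsq, Real.norm_eq_abs, Real.norm_eq_abs, sq_abs, sq_abs]
  have h1 : ‖Matrix.toEuclideanCLM (𝕜 := ℂ) (M.map Complex.ofReal) v‖ ^ 2
      ≤ (‖T‖ * ‖v‖) ^ 2 := by
    rw [hsq]
    calc ‖T x‖ ^ 2 + ‖T y‖ ^ 2 ≤ (‖T‖ * ‖x‖) ^ 2 + (‖T‖ * ‖y‖) ^ 2 := by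
          gcongr <;> [exact T.le_opNorm x; exact T.le_opNorm y]
      _ = ‖T‖ ^ 2 * (‖x‖ ^ 2 + ‖y‖ ^ 2) := by ring
      _ = (‖T‖ * ‖v‖) ^ 2 := by rw [hv]; ring
  exact le_of_pow_le_pow_left₀ two_ne_zero (by positivity) h1

private lemma prod_sub_one_le' (r : ℝ) (hr : 0 ≤ r) (s : Multiset ℂ)
    (h : ∀ a ∈ s, ‖a - 1‖ ≤ r) :
    ‖s.prod - 1‖ ≤ (1 + r) ^ (Multiset.card s) - 1 := by
  induction s using Multiset.induction with
  | empty => simp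
  | cons a s ih =>
    have ha : ‖a - 1‖ ≤ r := h a (Multiset.mem_cons_self a s)
    have hs : ‖s.prod - 1‖ ≤ (1 + r) ^ (Multiset.card s) - 1 :=
      ih fun b hb => h b (Multiset.mem_cons_of_mem hb)
    have hp : ‖s.prod‖ ≤ (1 + r) ^ (Multiset.card s) := by
      calc ‖s.prod‖ ≤ ‖s.prod - 1‖ + ‖(1 : ℂ)‖ := by
            simpa using norm_add_le (s.prod - 1) 1
        _ ≤ (1 + r) ^ (Multiset.card s) - 1 + 1 := by rw [norm_one]; gcongr
        _ = (1 + r) ^ (Multiset.card s) := by ring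
    rw [Multiset.prod_cons, Multiset.card_cons]
    have key : a * s.prod - 1 = (a - 1) * s.prod + (s.prod - 1) := by ring
    calc ‖a * s.prod - 1‖ ≤ ‖(a - 1) * s.prod‖ + ‖s.prod - 1‖ := by
          rw [key]; exact norm_add_le _ _
      _ ≤ r * (1 + r) ^ (Multiset.card s) + ((1 + r) ^ (Multiset.card s) - 1) := by
          gcongr
          rw [norm_mul]
          exact mul_le_mul ha hp (norm_nonneg _) hr
      _ = (1 + r) ^ (Multiset.card s + 1) - 1 := by ring

private lemma det_one_add_bound' (d : ℕ) (M : Matrix (Fin d) (Fin d) ℝ) :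
    |(1 + M).det - 1| ≤ (1 + ‖Matrix.toEuclideanCLM (𝕜 := ℝ) M‖) ^ d - 1 := by
  rcases Nat.eq_zero_or_pos d with hd | hd
  · subst hd
    rw [Matrix.det_fin_zero, sub_self, abs_zero, pow_zero, sub_self]
  set r := ‖Matrix.toEuclideanCLM (𝕜 := ℝ) M‖ with hr
  have hr0 : 0 ≤ r := norm_nonneg _
  set Mc : Matrix (Fin d) (Fin d) ℂ := M.map Complex.ofReal with hMc
  set N : Matrix (Fin d) (Fin d) ℂ := 1 + Mc with hN
  have hmap : N = (1 + M).map Complex.ofReal := by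
    ext i j
    by_cases h : i = j <;> simp [hN, hMc, Matrix.one_apply, h]
  have hNdet : N.det = ((1 + M).det : ℂ) := by
    rw [hmap]
    exact (RingHom.map_det Complex.ofRealHom (1 + M)).symm
  have hroots : N.det = (N.charpoly.roots).prod := Matrix.det_eq_prod_roots_charpoly N
  have hcard : Multiset.card N.charpoly.roots = d := by
    rw [(Polynomial.splits_iff_card_roots).mp (IsAlgClosed.splits N.charpoly),
      Matrix.charpoly_natDegree_eq_dim, Fintype.card_fin]
  have hbound : ∀ μ ∈ N.charpoly.roots, ‖μ - 1‖ ≤ r := by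
    intro μ hμ
    have hroot : N.charpoly.eval μ = 0 := Polynomial.isRoot_of_mem_roots hμ
    rw [eval_charpoly'] at hroot
    have hmat : Matrix.scalar (Fin d) (μ - 1) - Mc = Matrix.scalar (Fin d) μ - N := by
      rw [_root_.map_sub, _root_.map_one, hN]
      abel
    have heval : Mc.charpoly.eval (μ - 1) = 0 := by
      rw [eval_charpoly', hmat]
      exact hroot
    calc ‖μ - 1‖ ≤ ‖Matrix.toEuclideanCLM (𝕜 := ℂ) Mc‖ :=
          root_norm_le' d hd Mc (μ - 1) heval
      _ ≤ r := complexify_norm_le' d M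
  have key : ‖N.det - 1‖ ≤ (1 + r) ^ d - 1 := by
    rw [hroots]
    calc ‖N.charpoly.roots.prod - 1‖
        ≤ (1 + r) ^ (Multiset.card N.charpoly.roots) - 1 :=
          prod_sub_one_le' r hr0 N.charpoly.roots hbound
      _ = (1 + r) ^ d - 1 := by rw [hcard]
  rw [hNdet] at key
  have : ‖((1 + M).det : ℂ) - 1‖ = |(1 + M).det - 1| := by
    rw [← Complex.ofReal_one, ← Complex.ofReal_sub, Complex.norm_real, Real.norm_eq_abs]
  rwa [this] at key

set_option maxHeartbeats 1000000 in
/-- Relative determinant perturbation bound (Ipsen–Rehman). For `A, B ∈ ℝ^{d×d}` with `B`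
invertible, `|det A - det B| / |det B| ≤ (‖B⁻¹‖·‖A - B‖ + 1)^d - 1 ≤ exp(d‖B⁻¹‖‖A-B‖) - 1`,
where `‖·‖` is the spectral norm (the operator norm of the induced map on `ℓ²`). -/
theorem statement13 (d : ℕ) (A B : Matrix (Fin d) (Fin d) ℝ) (hB : IsUnit B.det) :
    |A.det - B.det| / |B.det| ≤
      (‖Matrix.toEuclideanCLM (𝕜 := ℝ) B⁻¹‖ * ‖Matrix.toEuclideanCLM (𝕜 := ℝ) (A - B)‖ + 1) ^ d
        - 1 ∧
    (‖Matrix.toEuclideanCLM (𝕜 := ℝ) B⁻¹‖ * ‖Matrix.toEuclideanCLM (𝕜 := ℝ) (A - B)‖ + 1) ^ d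
        - 1 ≤
      Real.exp (d * ‖Matrix.toEuclideanCLM (𝕜 := ℝ) B⁻¹‖ *
        ‖Matrix.toEuclideanCLM (𝕜 := ℝ) (A - B)‖) - 1 := by
  set c1 := ‖Matrix.toEuclideanCLM (𝕜 := ℝ) B⁻¹‖ with hc1
  set c2 := ‖Matrix.toEuclideanCLM (𝕜 := ℝ) (A - B)‖ with hc2
  have hc10 : 0 ≤ c1 := norm_nonneg _
  have hc20 : 0 ≤ c2 := norm_nonneg _
  constructor
  · set E : Matrix (Fin d) (Fin d) ℝ := B⁻¹ * (A - B) with hE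
    have h1E : (1 : Matrix (Fin d) (Fin d) ℝ) + E = B⁻¹ * A := by
      rw [hE, mul_sub, Matrix.nonsing_inv_mul B hB]
      abel
    have hBdet : B.det ≠ 0 := hB.ne_zero
    have hdet : (1 + E).det = A.det / B.det := by
      rw [h1E, Matrix.det_mul, Matrix.det_nonsing_inv, Ring.inverse_eq_inv]
      field_simp
    have hlhs : |A.det - B.det| / |B.det| = |(1 + E).det - 1| := by
      rw [hdet, ← abs_div]
      congr 1
      field_simp
    have hEnorm : ‖Matrix.toEuclideanCLM (𝕜 := ℝ) E‖ ≤ c1 * c2 := by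
      rw [hE, _root_.map_mul]
      exact norm_mul_le _ _
    calc |A.det - B.det| / |B.det| = |(1 + E).det - 1| := hlhs
      _ ≤ (1 + ‖Matrix.toEuclideanCLM (𝕜 := ℝ) E‖) ^ d - 1 := det_one_add_bound' d E
      _ ≤ (1 + c1 * c2) ^ d - 1 :=
          sub_le_sub_right (pow_le_pow_left₀ (by positivity) (by linarith) d) 1
      _ = (c1 * c2 + 1) ^ d - 1 := by rw [add_comm 1 (c1 * c2)]
  · have h1 : (c1 * c2 + 1) ^ d ≤ Real.exp (d * c1 * c2) := by
      calc (c1 * c2 + 1) ^ d ≤ Real.exp (c1 * c2) ^ d :=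
            pow_le_pow_left₀ (by positivity) (Real.add_one_le_exp _) d
        _ = Real.exp (d * c1 * c2) := by
            rw [← Real.exp_nat_mul]; ring_nf
    linarith
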